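/- Let A = (Q_{2^{s_n}})^{i_n}(Q_{2^{s_{n−1}}})^{i_{n−1}}⋯(Q_{2^{s_1}})^{i_1} be an A-polynomial. If there exists k ∈ {2,3,…,n} with i_k = 1 and s_k ≥ s_{k−1} + 2, then ∫ A dμ = 0. -/

import Mathlib

open Polynomial MeasureTheory Filter

/-- `r γ s` : the recursively defined scales `r 0 = 1`, `r (s+1) = γ (s+1) * (r s)²`. -/
noncomputable def r (γ : ℕ → ℝ) : ℕ → ℝ
  | 0 => 1
  | s + 1 => γ (s + 1) * (r γ s) ^ 2

/-- `P γ s` : the polynomial `P_{2^s}`, with `P_1 = X - 1` and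
`P_{2^{s+1}} = P_{2^s} · (P_{2^s} + r_s)`. -/
noncomputable def P (γ : ℕ → ℝ) : ℕ → Polynomial ℝ
  | 0 => X - 1
  | s + 1 => P γ s * (P γ s + C (r γ s))

/-- The integral `∫ f dν_s` of a function `f` against the normalized counting measure `ν_s`
on the `2^s` (simple, real) zeros of `P_{2^s} + r_s/2`. -/
noncomputable def nuInt (γ : ℕ → ℝ) (s : ℕ) (f : ℝ → ℝ) : ℝ :=
  (((P γ s + C (r γ s / 2)).roots.map f).sum) / 2 ^ s

/-- auxiliary: the shifted polynomial `T_s = P_{2^s} + r_s/2`. -/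
noncomputable def TT (γ : ℕ → ℝ) (s : ℕ) : Polynomial ℝ := P γ s + C (r γ s / 2)

/-- auxiliary constant `δ_s = r_s²/4 - r_{s+1}/2`. -/
noncomputable def dl (γ : ℕ → ℝ) (s : ℕ) : ℝ := (r γ s)^2/4 - r γ (s+1)/2

/-- sum of `p` over the roots of `T_u - v`. -/
noncomputable def Ssum (γ : ℕ → ℝ) (u : ℕ) (v : ℝ) (p : Polynomial ℝ) : ℝ :=
  (((TT γ u - C v).roots).map (fun x => p.eval x)).sum

lemma r_pos (γ : ℕ → ℝ) (hγ : ∀ s : ℕ, 0 < γ (s + 1) ∧ γ (s + 1) < 1 / 4) :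
    ∀ s, 0 < r γ s := by
  intro s
  induction s with
  | zero => norm_num [r]
  | succ s ih => exact mul_pos (hγ s).1 (pow_pos ih 2)

lemma P_monic_deg (γ : ℕ → ℝ) : ∀ s, (P γ s).Monic ∧ (P γ s).natDegree = 2 ^ s := by
  intro s
  induction s with
  | zero =>
    constructor
    · simpa [P] using (monic_X_sub_C (1 : ℝ))
    · simp only [P]
      rw [show (X - 1 : Polynomial ℝ) = X - C 1 by norm_num]
      exact natDegree_X_sub_C 1
  | succ s ih =>
    have hdegpos : (0 : WithBot ℕ) < (P γ s).degree := by
      rw [degree_eq_natDegree ih.1.ne_zero, ih.2]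
      exact_mod_cast pow_pos (by norm_num : (0:ℕ) < 2) s
    have h2 : (P γ s + C (r γ s)).Monic :=
      ih.1.add_of_left (lt_of_le_of_lt degree_C_le hdegpos)
    constructor
    · exact (ih.1.mul h2)
    · rw [show P γ (s+1) = P γ s * (P γ s + C (r γ s)) from rfl,
        Polynomial.natDegree_mul ih.1.ne_zero h2.ne_zero, ih.2,
        natDegree_add_C, ih.2]
      ring

lemma TT_monic (γ : ℕ → ℝ) (s : ℕ) : (TT γ s).Monic := by
  have h := P_monic_deg γ s
  have hdegpos : (0 : WithBot ℕ) < (P γ s).degree := by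
    rw [degree_eq_natDegree h.1.ne_zero, h.2]
    exact_mod_cast pow_pos (by norm_num : (0:ℕ) < 2) s
  exact h.1.add_of_left (lt_of_le_of_lt degree_C_le hdegpos)

lemma TT_natDegree (γ : ℕ → ℝ) (s : ℕ) : (TT γ s).natDegree = 2 ^ s := by
  have h := P_monic_deg γ s
  have hdegpos : 0 < (P γ s).natDegree := by
    rw [h.2]; exact pow_pos (by norm_num) s
  rw [TT, natDegree_add_C, h.2]

lemma TTsub_monic (γ : ℕ → ℝ) (s : ℕ) (v : ℝ) : (TT γ s - C v).Monic := by
  have h := TT_monic γ s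
  have hdegpos : (0 : WithBot ℕ) < (TT γ s).degree := by
    rw [degree_eq_natDegree h.ne_zero, TT_natDegree]
    exact_mod_cast pow_pos (by norm_num : (0:ℕ) < 2) s
  rw [sub_eq_add_neg]
  exact h.add_of_left (lt_of_le_of_lt (by simpa using (degree_C_le : (C (-v) : Polynomial ℝ).degree ≤ 0)) hdegpos)

lemma TT_succ (γ : ℕ → ℝ) (s : ℕ) : TT γ (s+1) = (TT γ s) ^ 2 - C (dl γ s) := by
  have e : r γ (s+1)/2 = (r γ s/2)*(r γ s/2) - dl γ s := by
    simp only [dl]; ring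
  have h3 : (C (r γ (s+1) / 2) : Polynomial ℝ) = C (r γ s / 2) * C (r γ s / 2) - C (dl γ s) := by
    rw [e, C_sub, C_mul]
  have h2 : (C (r γ s) : Polynomial ℝ) = C (r γ s / 2) + C (r γ s / 2) := by
    rw [← C_add]; norm_num
  show P γ s * (P γ s + C (r γ s)) + C (r γ (s+1)/2) = (P γ s + C (r γ s / 2)) ^ 2 - C (dl γ s)
  rw [h3, h2]
  ring

lemma TT_zero_sub (γ : ℕ → ℝ) (v : ℝ) : TT γ 0 - C v = X - C (1/2 + v) := by
  show (X - 1) + C ((1:ℝ)/2) - C v = X - C (1/2 + v)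
  have h1 : (1 : Polynomial ℝ) = C (1/2) + C (1/2) := by rw [← C_add]; norm_num
  rw [C_add]
  linear_combination -h1
section
variable (γ : ℕ → ℝ) (hγ : ∀ s : ℕ, 0 < γ (s + 1) ∧ γ (s + 1) < 1 / 4)
include hγ

lemma dl_add_nonneg {u : ℕ} {v : ℝ} (hv : |v| ≤ r γ (u+1) / 2) : 0 ≤ dl γ u + v := by
  have hr1 : r γ (u+1) = γ (u+1) * (r γ u)^2 := rfl
  have hb := abs_le.mp hv
  have h1 := (hγ u).1
  have h2 := (hγ u).2
  have h3 := r_pos γ hγ u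
  simp only [dl]
  nlinarith [mul_nonneg (by linarith : (0:ℝ) ≤ 1/4 - γ (u+1)) (sq_nonneg (r γ u))]

lemma sqrt_bound {u : ℕ} {v : ℝ} (hv : |v| ≤ r γ (u+1) / 2) :
    |Real.sqrt (dl γ u + v)| ≤ r γ u / 2 := by
  have hb := abs_le.mp hv
  have h3 := r_pos γ hγ u
  have hle : dl γ u + v ≤ (r γ u / 2)^2 := by simp only [dl]; nlinarith
  rw [abs_of_nonneg (Real.sqrt_nonneg _)]
  calc Real.sqrt (dl γ u + v) ≤ Real.sqrt ((r γ u / 2)^2) := Real.sqrt_le_sqrt hle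
    _ = r γ u / 2 := Real.sqrt_sq (by linarith)

lemma Sdecomp {u : ℕ} {v : ℝ} (hv : |v| ≤ r γ (u+1) / 2) (p : Polynomial ℝ) :
    Ssum γ (u+1) v p
      = Ssum γ u (Real.sqrt (dl γ u + v)) p + Ssum γ u (-(Real.sqrt (dl γ u + v))) p := by
  set α := Real.sqrt (dl γ u + v) with hα
  have hnn : 0 ≤ dl γ u + v := dl_add_nonneg γ hγ hv
  have hCC : (C α : Polynomial ℝ) * C α = C (dl γ u) + C v := by
    rw [← C_mul, ← C_add, Real.mul_self_sqrt hnn]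
  have hfac : TT γ (u+1) - C v = (TT γ u - C α) * (TT γ u - C (-α)) := by
    rw [TT_succ, C_neg]
    linear_combination hCC
  have hne : (TT γ u - C α) * (TT γ u - C (-α)) ≠ 0 :=
    mul_ne_zero (TTsub_monic γ u α).ne_zero (TTsub_monic γ u (-α)).ne_zero
  simp only [Ssum, hfac, Polynomial.roots_mul hne, Multiset.map_add, Multiset.sum_add]

lemma Sind : ∀ u : ℕ, ∀ p : Polynomial ℝ, p.natDegree < 2 ^ u →
    ∀ v w : ℝ, |v| ≤ r γ u / 2 → |w| ≤ r γ u / 2 → Ssum γ u v p = Ssum γ u w p := by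
  intro u
  induction u with
  | zero =>
    intro p hp v w _ _
    have hc : p = C (p.coeff 0) := p.eq_C_of_natDegree_le_zero (by simpa using Nat.lt_one_iff.mp hp)
    simp only [Ssum, TT_zero_sub, roots_X_sub_C, Multiset.map_singleton, Multiset.sum_singleton]
    rw [hc]; simp
  | succ u ih =>
    intro p hp v w hv hw
    -- evaluate at a point β with |β| ≤ r γ u / 2
    have key : ∀ β : ℝ, |β| ≤ r γ u / 2 →
        Ssum γ u β p = β * Ssum γ u 0 (p /ₘ TT γ u) + Ssum γ u 0 (p %ₘ TT γ u) := by
      intro β hβ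
      have hTm := TT_monic γ u
      have hr0 : |(0:ℝ)| ≤ r γ u / 2 := by
        rw [abs_zero]; linarith [r_pos γ hγ u]
      have hsplit : p %ₘ TT γ u + TT γ u * (p /ₘ TT γ u) = p := modByMonic_add_div p (TT γ u)
      have hdq : (p /ₘ TT γ u).natDegree < 2 ^ u := by
        have := natDegree_divByMonic p hTm
        rw [TT_natDegree] at this
        rw [this]
        have : p.natDegree < 2 ^ u + 2 ^ u := by
          have e : 2 ^ (u+1) = 2 ^ u + 2 ^ u := by rw [pow_succ]; ring
          omega
        omega
      have hdr : (p %ₘ TT γ u).natDegree < 2 ^ u := by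
        by_cases h0 : p %ₘ TT γ u = 0
        · rw [h0]; simpa using pow_pos (by norm_num : (0:ℕ) < 2) u
        · have hd := degree_modByMonic_lt p hTm
          rw [degree_eq_natDegree hTm.ne_zero, TT_natDegree] at hd
          exact (natDegree_lt_iff_degree_lt h0).mpr hd
      have heval : ∀ x ∈ (TT γ u - C β).roots,
          p.eval x = β * (p /ₘ TT γ u).eval x + (p %ₘ TT γ u).eval x := by
        intro x hx
        have hroot := (mem_roots'.mp hx).2
        have hTx : (TT γ u).eval x = β := by
          have := hroot
          simp only [IsRoot, eval_sub, eval_C, sub_eq_zero] at this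
          exact this
        conv_lhs => rw [← hsplit]
        simp [hTx]; ring
      have e1 : Ssum γ u β p
          = β * Ssum γ u β (p /ₘ TT γ u) + Ssum γ u β (p %ₘ TT γ u) := by
        unfold Ssum
        rw [Multiset.map_congr rfl heval, Multiset.sum_map_add, Multiset.sum_map_mul_left]
      rw [e1, ih _ hdq β 0 hβ hr0, ih _ hdr β 0 hβ hr0]
    rw [Sdecomp γ hγ hv, Sdecomp γ hγ hw]
    have hbv := sqrt_bound γ hγ hv
    have hbw := sqrt_bound γ hγ hw
    have hbv' : |(-(Real.sqrt (dl γ u + v)))| ≤ r γ u / 2 := by rwa [abs_neg]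
    have hbw' : |(-(Real.sqrt (dl γ u + w)))| ≤ r γ u / 2 := by rwa [abs_neg]
    rw [key _ hbv, key _ hbv', key _ hbw, key _ hbw']
    ring

lemma Szero (s : ℕ) (p : Polynomial ℝ) (hp : p.natDegree < 2 ^ s) :
    ∀ u : ℕ, s < u → ∀ v : ℝ, |v| ≤ r γ u / 2 → Ssum γ u v (TT γ s * p) = 0 := by
  intro u
  induction u with
  | zero => omega
  | succ u ih =>
    intro hsu v hv
    rw [Sdecomp γ hγ hv]
    rcases Nat.lt_or_ge s u with h | h
    · rw [ih h _ (sqrt_bound γ hγ hv), ih h _ (by rw [abs_neg]; exact sqrt_bound γ hγ hv)]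
      ring
    · have hsu' : s = u := by omega
      subst hsu'
      -- at level s : Ssum γ s β (TT γ s * p) = β * Ssum γ s β p
      have key : ∀ β : ℝ, |β| ≤ r γ s / 2 →
          Ssum γ s β (TT γ s * p) = β * Ssum γ s 0 p := by
        intro β hβ
        have hr0 : |(0:ℝ)| ≤ r γ s / 2 := by
          rw [abs_zero]; linarith [r_pos γ hγ s]
        have heval : ∀ x ∈ (TT γ s - C β).roots,
            (TT γ s * p).eval x = β * p.eval x := by
          intro x hx
          have hroot := (mem_roots'.mp hx).2
          have hTx : (TT γ s).eval x = β := by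
            have := hroot
            simp only [IsRoot, eval_sub, eval_C, sub_eq_zero] at this
            exact this
          simp [hTx]
        have e1 : Ssum γ s β (TT γ s * p) = β * Ssum γ s β p := by
          unfold Ssum
          rw [Multiset.map_congr rfl heval, Multiset.sum_map_mul_left]
        rw [e1, Sind γ hγ s p hp β 0 hβ hr0]
      rw [key _ (sqrt_bound γ hγ hv), key _ (by rw [abs_neg]; exact sqrt_bound γ hγ hv)]
      ring

end
lemma sum_update_helper (f : ℕ → ℕ) (i m L : ℕ) (hi : i < L) :
    (∑ t ∈ Finset.range L, Function.update f i m t) + f i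
      = (∑ t ∈ Finset.range L, f t) + m := by
  have hmem : i ∈ Finset.range L := Finset.mem_range.mpr hi
  have he : ∑ t ∈ (Finset.range L).erase i, Function.update f i m t
      = ∑ t ∈ (Finset.range L).erase i, f t :=
    Finset.sum_congr rfl (fun t ht => by rw [Function.update_of_ne (Finset.ne_of_mem_erase ht)])
  rw [← Finset.add_sum_erase _ (Function.update f i m) hmem,
    ← Finset.add_sum_erase _ f hmem, he, Function.update_self]
  omega

lemma prod_update_helper (Qf : ℕ → Polynomial ℝ) (f : ℕ → ℕ) (i m L : ℕ) (hi : i < L) :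
    (∏ t ∈ Finset.range L, Qf t ^ (Function.update f i m t)) * Qf i ^ (f i)
      = (∏ t ∈ Finset.range L, Qf t ^ f t) * Qf i ^ m := by
  have hmem : i ∈ Finset.range L := Finset.mem_range.mpr hi
  have he : ∏ t ∈ (Finset.range L).erase i, Qf t ^ (Function.update f i m t)
      = ∏ t ∈ (Finset.range L).erase i, Qf t ^ f t :=
    Finset.prod_congr rfl (fun t ht => by rw [Function.update_of_ne (Finset.ne_of_mem_erase ht)])
  rw [← Finset.mul_prod_erase _ (fun t => Qf t ^ (Function.update f i m t)) hmem,
    ← Finset.mul_prod_erase _ (fun t => Qf t ^ f t) hmem, he, Function.update_self]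
  ring

lemma prod_extend (Qf : ℕ → Polynomial ℝ) (f : ℕ → ℕ) {L L' : ℕ} (h : L ≤ L')
    (hf : ∀ t, L ≤ t → f t = 0) :
    (∏ t ∈ Finset.range L', Qf t ^ f t) = ∏ t ∈ Finset.range L, Qf t ^ f t :=
  (Finset.prod_subset (Finset.range_subset_range.mpr h) (fun x hx hnx => by
    rw [hf x (by simp only [Finset.mem_range] at hx hnx; omega), pow_zero])).symm

lemma sum_extend (f : ℕ → ℕ) {L L' : ℕ} (h : L ≤ L') (hf : ∀ t, L ≤ t → f t = 0) :
    (∑ t ∈ Finset.range L', f t) = ∑ t ∈ Finset.range L, f t :=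
  (Finset.sum_subset (Finset.range_subset_range.mpr h) (fun x hx hnx => by
    rw [hf x (by simp only [Finset.mem_range] at hx hnx; omega)])).symm
theorem stmt_9 (γ : ℕ → ℝ) (hγ : ∀ s : ℕ, 0 < γ (s + 1) ∧ γ (s + 1) < 1 / 4)
    (μ : Measure ℝ) [IsProbabilityMeasure μ]
    (hμint : ∀ p : Polynomial ℝ, Integrable (fun x => p.eval x) μ)
    (hμpos : ∀ p : Polynomial ℝ, p ≠ 0 → 0 < ∫ x, (p.eval x) ^ 2 ∂μ)
    (hμconv : ∀ p : Polynomial ℝ,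
      Tendsto (fun s => nuInt γ s (fun x => p.eval x)) atTop (nhds (∫ x, p.eval x ∂μ)))
    (Q : ℕ → Polynomial ℝ) (hQmonic : ∀ n, (Q n).Monic) (hQdeg : ∀ n, (Q n).natDegree = n)
    (hQorth : ∀ n : ℕ, ∀ p : Polynomial ℝ, p.degree < (n : WithBot ℕ) →
      ∫ x, (Q n).eval x * p.eval x ∂μ = 0)
    (n : ℕ) (hn : 1 ≤ n) (sf idx : ℕ → ℕ)
    (hs1 : 0 < sf 1) (hsmono : ∀ k, 1 ≤ k → k < n → sf k < sf (k + 1))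
    (hidx : ∀ k, 1 ≤ k → k ≤ n → idx k = 1 ∨ idx k = 2)
    (k : ℕ) (hk1 : 2 ≤ k) (hk2 : k ≤ n) (hone : idx k = 1)
    (hgap : sf (k - 1) + 2 ≤ sf k) :
    ∫ x, ∏ j ∈ Finset.Icc 1 n, ((Q (2 ^ sf j)).eval x) ^ idx j ∂μ = 0 := by
  -- Step 1: the measure μ is orthogonal to `T_s · p` for `deg p < 2^s`.
  have orthT : ∀ (s : ℕ) (p : Polynomial ℝ), p.natDegree < 2 ^ s →
      ∫ x, (TT γ s * p).eval x ∂μ = 0 := by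
    intro s p hp
    have hev : (fun t => nuInt γ t (fun x => (TT γ s * p).eval x)) =ᶠ[atTop]
        (fun _ => (0:ℝ)) := by
      filter_upwards [eventually_ge_atTop (s+1)] with t ht
      have hz := Szero γ hγ s p hp t (by omega) 0
        (by rw [abs_zero]; linarith [r_pos γ hγ t])
      simp only [Ssum, C_0, sub_zero] at hz
      simp only [nuInt, show P γ t + C (r γ t / 2) = TT γ t from rfl, hz, zero_div]
    exact tendsto_nhds_unique (Tendsto.congr' hev (hμconv (TT γ s * p))) tendsto_const_nhds
  -- Step 2: identification of the orthogonal polynomials.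
  have QT : ∀ s : ℕ, Q (2 ^ s) = TT γ s := by
    intro s
    by_contra h
    have hne : Q (2 ^ s) - TT γ s ≠ 0 := sub_ne_zero_of_ne h
    have degQ : (Q (2 ^ s)).degree = ((2 ^ s : ℕ) : WithBot ℕ) := by
      rw [degree_eq_natDegree (hQmonic _).ne_zero, hQdeg]
    have degT : (TT γ s).degree = ((2 ^ s : ℕ) : WithBot ℕ) := by
      rw [degree_eq_natDegree (TT_monic γ s).ne_zero, TT_natDegree]
    have hdlt : (Q (2 ^ s) - TT γ s).degree < ((2 ^ s : ℕ) : WithBot ℕ) := by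
      have := degree_sub_lt (degQ.trans degT.symm) (hQmonic _).ne_zero
        (by rw [(hQmonic _).leadingCoeff, (TT_monic γ s).leadingCoeff])
      rwa [degQ] at this
    have natlt : (Q (2 ^ s) - TT γ s).natDegree < 2 ^ s :=
      (natDegree_lt_iff_degree_lt hne).mpr hdlt
    have horth1 : ∫ x, (Q (2 ^ s) * (Q (2 ^ s) - TT γ s)).eval x ∂μ = 0 := by
      have := hQorth (2 ^ s) _ (by exact_mod_cast hdlt)
      simpa only [eval_mul] using this
    have horth2 : ∫ x, (TT γ s * (Q (2 ^ s) - TT γ s)).eval x ∂μ = 0 := orthT s _ natlt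
    have key : ∫ x, ((Q (2 ^ s) - TT γ s).eval x) ^ 2 ∂μ = 0 := by
      have hfe : (fun x => ((Q (2 ^ s) - TT γ s).eval x) ^ 2)
          = fun x => (Q (2 ^ s) * (Q (2 ^ s) - TT γ s)).eval x
            - (TT γ s * (Q (2 ^ s) - TT γ s)).eval x := by
        funext x; simp only [eval_mul, eval_sub]; ring
      rw [hfe, integral_sub (hμint _) (hμint _), horth1, horth2, sub_zero]
    have := hμpos _ hne
    linarith
  have Qsq : ∀ t : ℕ, (Q (2 ^ t)) ^ 2 = Q (2 ^ (t + 1)) + C (dl γ t) := by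
    intro t
    rw [QT t, QT (t + 1), TT_succ]
    ring
  have horthnat : ∀ (m : ℕ) (B : Polynomial ℝ), B.natDegree < m →
      ∫ x, (Q m * B).eval x ∂μ = 0 := by
    intro m B hB
    have hdeg : B.degree < (m : WithBot ℕ) :=
      lt_of_le_of_lt degree_le_natDegree (by exact_mod_cast hB)
    simpa only [eval_mul] using hQorth m B hdeg
    -- Step 3: main induction
  have Zmain : ∀ (N t₁ L : ℕ) (e : ℕ → ℕ) (B : Polynomial ℝ),
      (∀ t, t ≤ t₁ → e t = 0) → (∀ t, L ≤ t → e t = 0) → B.natDegree < 2 ^ t₁ →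
      (∑ t ∈ Finset.range L, e t) ≤ N →
      ∫ x, (Q (2 ^ t₁) * (∏ t ∈ Finset.range L, Q (2 ^ t) ^ e t) * B).eval x ∂μ = 0 := by
    intro N
    induction N with
    | zero =>
      intro t₁ L e B he0 heL hB hsum
      have hz : ∀ t ∈ Finset.range L, Q (2 ^ t) ^ e t = 1 := by
        intro t ht
        have h0 : e t = 0 := by
          have := Finset.sum_eq_zero_iff.mp (Nat.le_zero.mp hsum) t ht
          exact this
        rw [h0, pow_zero]
      rw [Finset.prod_eq_one hz, mul_one]
      exact horthnat _ _ hB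
    | succ N IH =>
      intro t₁ L e B he0 heL hB hsum
      by_cases hex : ∃ t, e t ≠ 0
      case neg =>
        push_neg at hex
        have hz : ∀ t ∈ Finset.range L, Q (2 ^ t) ^ e t = 1 := fun t _ => by
          rw [hex t, pow_zero]
        rw [Finset.prod_eq_one hz, mul_one]
        exact horthnat _ _ hB
      case pos =>
        set t₂ := Nat.find hex with ht₂def
        have ht₂ : e t₂ ≠ 0 := Nat.find_spec hex
        have hmin : ∀ t, t < t₂ → e t = 0 := fun t ht => not_not.mp (Nat.find_min hex ht)
        have ht₁t₂ : t₁ < t₂ := by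
          by_contra h; push_neg at h; exact ht₂ (he0 _ h)
        have ht₂L : t₂ < L := by
          by_contra h; push_neg at h; exact ht₂ (heL _ h)
        have hQne : ∀ m : ℕ, Q m ≠ 0 := fun m => (hQmonic m).ne_zero
        rcases Nat.lt_or_ge (e t₂) 2 with hcase | hcase
        · -- e t₂ = 1 : fold the bottom factor into B
          have h1 : e t₂ = 1 := by omega
          have hupd := prod_update_helper (fun t => Q (2 ^ t)) e t₂ 0 L ht₂L
          rw [h1, pow_one, pow_zero, mul_one] at hupd
          have hB' : (Q (2 ^ t₁) * B).natDegree < 2 ^ t₂ := by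
            calc (Q (2 ^ t₁) * B).natDegree ≤ (Q (2 ^ t₁)).natDegree + B.natDegree :=
                natDegree_mul_le
              _ < 2 ^ t₁ + 2 ^ t₁ := by rw [hQdeg]; omega
              _ = 2 ^ (t₁ + 1) := by rw [pow_succ]; ring
              _ ≤ 2 ^ t₂ := Nat.pow_le_pow_right (by norm_num) (by omega)
          have hsum' := sum_update_helper e t₂ 0 L ht₂L
          have happ := IH t₂ L (Function.update e t₂ 0) (Q (2 ^ t₁) * B)
            (fun t ht => by
              rcases Nat.lt_or_ge t t₂ with h | h
              · rw [Function.update_of_ne (by omega)]; exact hmin t h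
              · have hte : t = t₂ := by omega
                rw [hte, Function.update_self])
            (fun t ht => by
              rw [Function.update_of_ne (by omega)]; exact heL t ht)
            hB' (by omega)
          have hpoly : Q (2 ^ t₁) * (∏ t ∈ Finset.range L, Q (2 ^ t) ^ e t) * B
              = Q (2 ^ t₂) * (∏ t ∈ Finset.range L, Q (2 ^ t) ^ (Function.update e t₂ 0 t))
                * (Q (2 ^ t₁) * B) := by
            rw [← hupd]; ring
          rw [hpoly]; exact happ
        · -- e t₂ ≥ 2 : use the square identity
          obtain ⟨m, hm⟩ : ∃ m, e t₂ = m + 2 := ⟨e t₂ - 2, by omega⟩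
          set L₁ := max L (t₂ + 2) with hL₁def
          have hLL₁ : L ≤ L₁ := le_max_left _ _
          have ht₂2 : t₂ + 2 ≤ L₁ := le_max_right _ _
          have ht₂L₁ : t₂ < L₁ := by omega
          have hext := prod_extend (fun t => Q (2 ^ t)) e hLL₁ heL
          have hextS := sum_extend e hLL₁ heL
          set f₁ := Function.update e t₂ m with hf₁def
          set f₂ := Function.update f₁ (t₂ + 1) (f₁ (t₂ + 1) + 1) with hf₂def
          -- key product identities
          have hkey : (∏ t ∈ Finset.range L₁, Q (2 ^ t) ^ e t)
              = (∏ t ∈ Finset.range L₁, Q (2 ^ t) ^ f₁ t) * (Q (2 ^ t₂)) ^ 2 := by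
            have h := prod_update_helper (fun t => Q (2 ^ t)) e t₂ m L₁ ht₂L₁
            rw [hm] at h
            apply mul_right_cancel₀ (pow_ne_zero m (hQne (2 ^ t₂)))
            calc (∏ t ∈ Finset.range L₁, Q (2 ^ t) ^ e t) * Q (2 ^ t₂) ^ m
                = (∏ t ∈ Finset.range L₁, Q (2 ^ t) ^ f₁ t) * Q (2 ^ t₂) ^ (m + 2) := h.symm
              _ = ((∏ t ∈ Finset.range L₁, Q (2 ^ t) ^ f₁ t) * Q (2 ^ t₂) ^ 2)
                  * Q (2 ^ t₂) ^ m := by ring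
          have h7 : (∏ t ∈ Finset.range L₁, Q (2 ^ t) ^ f₂ t)
              = (∏ t ∈ Finset.range L₁, Q (2 ^ t) ^ f₁ t) * Q (2 ^ (t₂ + 1)) := by
            have h := prod_update_helper (fun t => Q (2 ^ t)) f₁ (t₂ + 1) (f₁ (t₂ + 1) + 1) L₁
              (by omega)
            apply mul_right_cancel₀ (pow_ne_zero (f₁ (t₂ + 1)) (hQne (2 ^ (t₂ + 1))))
            calc (∏ t ∈ Finset.range L₁, Q (2 ^ t) ^ f₂ t) * Q (2 ^ (t₂ + 1)) ^ f₁ (t₂ + 1)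
                = (∏ t ∈ Finset.range L₁, Q (2 ^ t) ^ f₁ t) * Q (2 ^ (t₂+1)) ^ (f₁ (t₂+1) + 1) :=
                h
              _ = ((∏ t ∈ Finset.range L₁, Q (2 ^ t) ^ f₁ t) * Q (2 ^ (t₂ + 1)))
                  * Q (2 ^ (t₂ + 1)) ^ f₁ (t₂ + 1) := by ring
          -- split the polynomial
          have hG : Q (2 ^ t₁) * (∏ t ∈ Finset.range L, Q (2 ^ t) ^ e t) * B
              = Q (2 ^ t₁) * (∏ t ∈ Finset.range L₁, Q (2 ^ t) ^ f₂ t) * B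
                + Q (2 ^ t₁) * (∏ t ∈ Finset.range L₁, Q (2 ^ t) ^ f₁ t) * (C (dl γ t₂) * B) := by
            rw [← hext, hkey, Qsq t₂, h7]; ring
          -- support and sum facts
          have hf₁0 : ∀ t, t ≤ t₁ → f₁ t = 0 := fun t ht => by
            rw [hf₁def, Function.update_of_ne (by omega)]; exact he0 t ht
          have hf₂0 : ∀ t, t ≤ t₁ → f₂ t = 0 := fun t ht => by
            rw [hf₂def, Function.update_of_ne (by omega)]; exact hf₁0 t ht
          have hf₁L : ∀ t, L₁ ≤ t → f₁ t = 0 := fun t ht => by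
            rw [hf₁def, Function.update_of_ne (by omega)]; exact heL t (by omega)
          have hf₂L : ∀ t, L₁ ≤ t → f₂ t = 0 := fun t ht => by
            rw [hf₂def, Function.update_of_ne (by omega)]; exact hf₁L t ht
          have hs₁ := sum_update_helper e t₂ m L₁ ht₂L₁
          rw [← hf₁def] at hs₁
          have hs₂ := sum_update_helper f₁ (t₂ + 1) (f₁ (t₂ + 1) + 1) L₁ (by omega)
          rw [← hf₂def] at hs₂
          have hsum₁ : (∑ t ∈ Finset.range L₁, f₁ t) ≤ N := by omega
          have hsum₂ : (∑ t ∈ Finset.range L₁, f₂ t) ≤ N := by omega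
          have happ₁ := IH t₁ L₁ f₂ B hf₂0 hf₂L hB hsum₂
          have happ₂ := IH t₁ L₁ f₁ (C (dl γ t₂) * B) hf₁0 hf₁L
            (lt_of_le_of_lt (natDegree_C_mul_le _ _) hB) hsum₁
          rw [hG]
          simp only [eval_add]
          rw [integral_add (hμint _) (hμint _), happ₁, happ₂, add_zero]
    -- Step 4: assembly
  have hmono_le : ∀ a b, 1 ≤ a → a ≤ b → b ≤ n → sf a ≤ sf b := by
    intro a b ha hab hbn
    have key : ∀ d : ℕ, a + d ≤ n → sf a ≤ sf (a + d) := by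
      intro d
      induction d with
      | zero => intro _; simp
      | succ d ihd =>
        intro hdn
        exact le_of_lt (lt_of_le_of_lt (ihd (by omega))
          (hsmono (a + d) (by omega) (by omega)))
    have := key (b - a) (by omega)
    rwa [show a + (b - a) = b by omega] at this
  have hmono_lt : ∀ a b, 1 ≤ a → a < b → b ≤ n → sf a < sf b := by
    intro a b ha hab hbn
    calc sf a ≤ sf (b - 1) := hmono_le a (b - 1) ha (by omega) (by omega)
      _ < sf b := by
        have := hsmono (b - 1) (by omega) (by omega)
        rwa [show b - 1 + 1 = b by omega] at this
  have hsum_bound : ∀ m, 1 ≤ m → m ≤ n →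
      (∑ j ∈ Finset.Icc 1 m, idx j * 2 ^ sf j) < 2 ^ (sf m + 2) := by
    intro m
    induction m with
    | zero => omega
    | succ m ihm =>
      intro _ hmn
      by_cases hm0 : m = 0
      · subst hm0
        simp only [Nat.zero_add]
        rw [show Finset.Icc 1 1 = {1} by rfl, Finset.sum_singleton]
        have hidx1 : idx 1 ≤ 2 := by rcases hidx 1 le_rfl (by omega) with h | h <;> omega
        have h4 : 2 ^ (sf 1 + 2) = 4 * 2 ^ sf 1 := by rw [pow_add]; ring
        have h5 : idx 1 * 2 ^ sf 1 ≤ 2 * 2 ^ sf 1 := Nat.mul_le_mul_right _ hidx1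
        have hp : 0 < 2 ^ sf 1 := pow_pos (by norm_num) _
        omega
      · have h1m : 1 ≤ m := by omega
        have ih := ihm h1m (by omega)
        rw [Finset.sum_Icc_succ_top (by omega : 1 ≤ m + 1)]
        have hlt : sf m < sf (m + 1) := hsmono m h1m (by omega)
        have hidxm : idx (m + 1) ≤ 2 := by
          rcases hidx (m + 1) (by omega) (by omega) with h | h <;> omega
        have e1 : 2 ^ (sf m + 2) ≤ 2 * 2 ^ sf (m + 1) := by
          calc 2 ^ (sf m + 2) ≤ 2 ^ (sf (m + 1) + 1) :=
              Nat.pow_le_pow_right (by norm_num) (by omega)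
            _ = 2 * 2 ^ sf (m + 1) := by rw [pow_succ]; ring
        have e2 : 2 ^ (sf (m + 1) + 2) = 4 * 2 ^ sf (m + 1) := by rw [pow_add]; ring
        have e3 : idx (m + 1) * 2 ^ sf (m + 1) ≤ 2 * 2 ^ sf (m + 1) :=
          Nat.mul_le_mul_right _ hidxm
        omega
  set L := sf n + 1 with hLdef
  set e : ℕ → ℕ :=
    fun t => ∑ j ∈ (Finset.Icc (k + 1) n).filter (fun j => sf j = t), idx j with hedef
  set BL := ∏ j ∈ Finset.Icc 1 (k - 1), Q (2 ^ sf j) ^ idx j with hBLdef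
  have hBL : BL.natDegree < 2 ^ sf k := by
    calc BL.natDegree ≤ ∑ j ∈ Finset.Icc 1 (k - 1), (Q (2 ^ sf j) ^ idx j).natDegree :=
        natDegree_prod_le _ _
      _ = ∑ j ∈ Finset.Icc 1 (k - 1), idx j * 2 ^ sf j :=
        Finset.sum_congr rfl (fun j _ => by rw [natDegree_pow, hQdeg])
      _ < 2 ^ (sf (k - 1) + 2) := hsum_bound (k - 1) (by omega) (by omega)
      _ ≤ 2 ^ sf k := Nat.pow_le_pow_right (by norm_num) hgap
  have he0 : ∀ t, t ≤ sf k → e t = 0 := by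
    intro t ht
    apply Finset.sum_eq_zero
    intro j hj
    exfalso
    simp only [Finset.mem_filter, Finset.mem_Icc] at hj
    obtain ⟨⟨hj1, hj2⟩, hj3⟩ := hj
    have := hmono_lt k j (by omega) (by omega) hj2
    omega
  have heL : ∀ t, L ≤ t → e t = 0 := by
    intro t ht
    apply Finset.sum_eq_zero
    intro j hj
    exfalso
    simp only [Finset.mem_filter, Finset.mem_Icc] at hj
    obtain ⟨⟨hj1, hj2⟩, hj3⟩ := hj
    have := hmono_le j n (by omega) hj2 le_rfl
    omega
  have hU : (∏ t ∈ Finset.range L, Q (2 ^ t) ^ e t)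
      = ∏ j ∈ Finset.Icc (k + 1) n, Q (2 ^ sf j) ^ idx j := by
    have hmaps : ∀ j ∈ Finset.Icc (k + 1) n, sf j ∈ Finset.range L := by
      intro j hj
      simp only [Finset.mem_Icc] at hj
      have := hmono_le j n (by omega) hj.2 le_rfl
      simp only [Finset.mem_range]
      omega
    rw [← Finset.prod_fiberwise_of_maps_to hmaps (fun j => Q (2 ^ sf j) ^ idx j)]
    apply Finset.prod_congr rfl
    intro t _
    symm
    calc (∏ j ∈ (Finset.Icc (k + 1) n).filter (fun j => sf j = t), Q (2 ^ sf j) ^ idx j)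
        = ∏ j ∈ (Finset.Icc (k + 1) n).filter (fun j => sf j = t), Q (2 ^ t) ^ idx j :=
        Finset.prod_congr rfl (fun j hj => by rw [(Finset.mem_filter.mp hj).2])
      _ = Q (2 ^ t) ^ (∑ j ∈ (Finset.Icc (k + 1) n).filter (fun j => sf j = t), idx j) :=
        Finset.prod_pow_eq_pow_sum _ _ _
      _ = Q (2 ^ t) ^ e t := rfl
  have hsplit : (∏ j ∈ Finset.Icc 1 n, Q (2 ^ sf j) ^ idx j)
      = Q (2 ^ sf k) * (∏ t ∈ Finset.range L, Q (2 ^ t) ^ e t) * BL := by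
    rw [hU]
    have hunion : Finset.Icc 1 (k - 1) ∪ Finset.Icc k n = Finset.Icc 1 n := by
      ext j
      simp only [Finset.mem_union, Finset.mem_Icc]
      omega
    have hdisj : Disjoint (Finset.Icc 1 (k - 1)) (Finset.Icc k n) := by
      rw [Finset.disjoint_left]
      intro j hj hj2
      simp only [Finset.mem_Icc] at hj hj2
      omega
    have herase : (Finset.Icc k n).erase k = Finset.Icc (k + 1) n := by
      ext j
      simp only [Finset.mem_erase, Finset.mem_Icc]
      omega
    rw [← hunion, Finset.prod_union hdisj,
      ← Finset.mul_prod_erase _ _ (Finset.mem_Icc.mpr ⟨le_refl k, hk2⟩), herase, hone, pow_one]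
    rw [hBLdef]
    ring
  have hfun : ∫ x, ∏ j ∈ Finset.Icc 1 n, ((Q (2 ^ sf j)).eval x) ^ idx j ∂μ
      = ∫ x, (Q (2 ^ sf k) * (∏ t ∈ Finset.range L, Q (2 ^ t) ^ e t) * BL).eval x ∂μ := by
    congr 1
    funext x
    rw [← hsplit]
    simp [eval_prod, eval_pow]
  rw [hfun]
  exact Zmain (∑ t ∈ Finset.range L, e t) (sf k) L e BL he0 heL hBL le_rfl
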